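/- Let φ : ℝ → ℝ be the lift of an orientation-preserving C^∞ diffeomorphism of S¹ (φ is C^∞, φ' > 0, φ(θ+2π) = φ(θ)+2π), and for nonzero integers m, n set I_{n,m} = (1/2π)∫₀^{2π} e^{i(mφ(θ) − nθ)}dθ. Then there exist a constant C > 0 and an integer M₀ such that for every nonzero integer m with |m| ≥ M₀, Σ_{n≠0} |n|·|I_{n,m}|² ≤ C·|m|. -/

import Mathlib

open MeasureTheory

/-- `I_{n,m} = (1/2π) ∫₀^{2π} e^{i(mφ(θ) − nθ)} dθ`, the `n`-th Fourier coefficient of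
`θ ↦ e^{imφ(θ)}`. -/
noncomputable def Icoef (φ : ℝ → ℝ) (n m : ℤ) : ℂ :=
  (1 / (2 * Real.pi)) * ∫ θ in (0:ℝ)..(2 * Real.pi),
    Complex.exp (Complex.I * ((m : ℝ) * φ θ - (n : ℝ) * θ : ℝ))

open Set intervalIntegral
open scoped Real

noncomputable section

namespace RowsAux

local instance hT : Fact (0 < 2 * π) := ⟨by positivity⟩

lemma fourierCoeff_periodic_lift (g : ℝ → ℂ) (hg : Function.Periodic g (2 * π)) (n : ℤ) :
    fourierCoeff (hg.lift : AddCircle (2 * π) → ℂ) n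
      = fourierCoeffOn (by positivity : (0:ℝ) < 2 * π) g n := by
  rw [fourierCoeff_eq_intervalIntegral _ n 0, fourierCoeffOn_eq_integral]
  rw [zero_add, sub_zero]
  have := intervalIntegral.integral_congr (μ := volume) (a := (0:ℝ)) (b := 2 * π)
    (f := fun x : ℝ => (fourier (-n)) (x : AddCircle (2 * π)) • hg.lift (x : AddCircle (2 * π)))
    (g := fun x : ℝ => (fourier (-n)) (x : AddCircle (2 * π)) • g x)
    (fun x _ => by simp [Function.Periodic.lift_coe])
  rw [this]

/-- Parseval for a continuous periodic function. -/
lemma parseval_lift (g : ℝ → ℂ) (hg : Function.Periodic g (2 * π)) (hc : Continuous g) :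
    Summable (fun n : ℤ => ‖fourierCoeff (hg.lift : AddCircle (2 * π) → ℂ) n‖ ^ 2) ∧
    ∑' n : ℤ, ‖fourierCoeff (hg.lift : AddCircle (2 * π) → ℂ) n‖ ^ 2
      = (1 / (2 * π)) * ∫ θ in Ioc (0:ℝ) (2 * π), ‖g θ‖ ^ 2 := by
  have hcl : Continuous (hg.lift : AddCircle (2 * π) → ℂ) := hc.quotient_liftOn' _
  set F : C(AddCircle (2 * π), ℂ) := ⟨hg.lift, hcl⟩ with hF
  have hFcoe : ∀ n, fourierCoeff (hg.lift : AddCircle (2 * π) → ℂ) n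
      = fourierCoeff (ContinuousMap.toLp (E := ℂ) 2 AddCircle.haarAddCircle ℂ F) n := by
    intro n
    rw [fourierCoeff_toLp]
    rfl
  constructor
  · have hmem := lp.memℓp ((fourierBasis (T := 2 * π)).repr
      (ContinuousMap.toLp (E := ℂ) 2 AddCircle.haarAddCircle ℂ F))
    rw [memℓp_gen_iff (by norm_num : (0:ℝ) < (2 : ENNReal).toReal)] at hmem
    refine Summable.congr hmem fun n => ?_
    rw [fourierBasis_repr, ← hFcoe n]
    norm_num
  · have hP := tsum_sq_fourierCoeff (ContinuousMap.toLp (E := ℂ) 2 AddCircle.haarAddCircle ℂ F)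
    simp_rw [← hFcoe] at hP
    rw [hP]
    have e1 : (∫ t, ‖(ContinuousMap.toLp (E := ℂ) 2 AddCircle.haarAddCircle ℂ F) t‖ ^ 2
          ∂(AddCircle.haarAddCircle))
        = ∫ t, ‖F t‖ ^ 2 ∂(AddCircle.haarAddCircle) := by
      refine integral_congr_ae ?_
      filter_upwards [ContinuousMap.coeFn_toLp (p := 2) (𝕜 := ℂ) AddCircle.haarAddCircle F]
        with t ht
      rw [ht]
    have e2 : (∫ t : AddCircle (2 * π), ‖F t‖ ^ 2 ∂(volume : Measure (AddCircle (2 * π))))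
        = ∫ θ in Ioc (0:ℝ) (2 * π), ‖g θ‖ ^ 2 := by
      rw [← AddCircle.integral_preimage (2 * π) 0 (fun t => ‖F t‖ ^ 2), zero_add]
      refine setIntegral_congr_fun measurableSet_Ioc fun θ _ => ?_
      rw [hF]
      simp [Function.Periodic.lift_coe]
    have e3 : (∫ t, ‖F t‖ ^ 2 ∂(AddCircle.haarAddCircle (T := 2 * π)))
        = (1 / (2 * π)) * ∫ t : AddCircle (2 * π), ‖F t‖ ^ 2 ∂(volume) := by
      rw [AddCircle.volume_eq_smul_haarAddCircle, MeasureTheory.integral_smul_measure,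
        ENNReal.toReal_ofReal (by positivity), smul_eq_mul]
      field_simp
    rw [e1, e3, e2]


/-- The function `θ ↦ exp(i m φ(θ))`. -/
def efun (φ : ℝ → ℝ) (m : ℤ) (θ : ℝ) : ℂ :=
  Complex.exp (Complex.I * ((m : ℝ) * φ θ : ℝ))

lemma norm_efun (φ : ℝ → ℝ) (m : ℤ) (θ : ℝ) : ‖efun φ m θ‖ = 1 := by
  simp [efun, Complex.norm_exp]

lemma efun_periodic (φ : ℝ → ℝ) (m : ℤ)
    (hlift : ∀ θ, φ (θ + 2 * π) = φ θ + 2 * π) :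
    Function.Periodic (efun φ m) (2 * π) := by
  intro θ
  simp only [efun, hlift θ]
  have : (Complex.I * (((m : ℝ) * (φ θ + 2 * π) : ℝ) : ℂ))
      = Complex.I * (((m : ℝ) * φ θ : ℝ) : ℂ) + (m : ℂ) * (2 * π * Complex.I) := by
    push_cast; ring
  rw [this, Complex.exp_add, Complex.exp_int_mul_two_pi_mul_I, mul_one]

lemma deriv_periodic (φ : ℝ → ℝ)
    (hlift : ∀ θ, φ (θ + 2 * π) = φ θ + 2 * π) (θ : ℝ) :
    deriv φ (θ + 2 * π) = deriv φ θ := by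
  have h1 : deriv (fun t => φ (t + 2 * π)) θ = deriv φ (θ + 2 * π) :=
    deriv_comp_add_const φ (2 * π) θ
  have h2 : (fun t => φ (t + 2 * π)) = fun t => φ t + 2 * π := funext hlift
  rw [← h1, h2, deriv_add_const]

lemma continuous_efun (φ : ℝ → ℝ) (m : ℤ) (hc : Continuous φ) :
    Continuous (efun φ m) :=
  Complex.continuous_exp.comp (continuous_const.mul
    (Complex.continuous_ofReal.comp (continuous_const.mul hc)))

lemma hasDerivAt_efun (φ : ℝ → ℝ) (m : ℤ) (hφ : ContDiff ℝ (⊤ : ℕ∞) φ) (θ : ℝ) :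
    HasDerivAt (efun φ m) (Complex.I * m * (deriv φ θ) * efun φ m θ) θ := by
  have h1 : HasDerivAt φ (deriv φ θ) θ := (hφ.differentiable (by simp) θ).hasDerivAt
  have h2 := ((h1.const_mul ((m : ℝ))).ofReal_comp).const_mul Complex.I
  have h3 := h2.cexp
  convert h3 using 1
  · rfl
  simp only [efun]
  push_cast
  ring

lemma norm_efun' (φ : ℝ → ℝ) (m : ℤ) (hφ' : ∀ θ, 0 < deriv φ θ) (θ : ℝ) :
    ‖Complex.I * m * (deriv φ θ) * efun φ m θ‖ = |(m : ℝ)| * deriv φ θ := by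
  rw [norm_mul, norm_mul, norm_mul, norm_efun, Complex.norm_I]
  simp [Complex.norm_real, Real.norm_eq_abs, abs_of_pos (hφ' θ),
    Complex.norm_intCast]


lemma Icoef_eq (φ : ℝ → ℝ) (m n : ℤ)
    (hlift : ∀ θ, φ (θ + 2 * π) = φ θ + 2 * π) :
    Icoef φ n m = fourierCoeff ((efun_periodic φ m hlift).lift : AddCircle (2 * π) → ℂ) n := by
  rw [fourierCoeff_eq_intervalIntegral _ n 0, zero_add, Icoef]
  rw [intervalIntegral.integral_congr (μ := volume) (a := (0:ℝ)) (b := 2 * π)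
    (f := fun θ : ℝ => Complex.exp (Complex.I * (((m : ℝ) * φ θ - (n : ℝ) * θ : ℝ) : ℂ)))
    (g := fun x : ℝ => (fourier (-n)) (x : AddCircle (2 * π))
      • (efun_periodic φ m hlift).lift (x : AddCircle (2 * π)))
    (fun x _ => ?_)]
  · rw [Complex.real_smul]
    norm_num
  · beta_reduce
    rw [Function.Periodic.lift_coe, fourier_coe_apply, smul_eq_mul, efun, ← Complex.exp_add]
    congr 1
    have hπ : (π : ℂ) ≠ 0 := Complex.ofReal_ne_zero.mpr Real.pi_ne_zero
    push_cast
    field_simp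
    ring


lemma efun'_periodic (φ : ℝ → ℝ) (m : ℤ) (hlift : ∀ θ, φ (θ + 2 * π) = φ θ + 2 * π) :
    Function.Periodic (fun θ => Complex.I * m * (deriv φ θ) * efun φ m θ) (2 * π) := by
  intro θ
  beta_reduce
  rw [deriv_periodic φ hlift, efun_periodic φ m hlift]

lemma continuous_efun' (φ : ℝ → ℝ) (m : ℤ) (hφ : ContDiff ℝ (⊤ : ℕ∞) φ) :
    Continuous (fun θ => Complex.I * m * (deriv φ θ) * efun φ m θ) :=
  (continuous_const.mul (Complex.continuous_ofReal.comp
    (hφ.continuous_deriv (by exact_mod_cast le_top)))).mul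
    (continuous_efun φ m hφ.continuous)

lemma coeff_rel (φ : ℝ → ℝ) (m : ℤ) (hφ : ContDiff ℝ (⊤ : ℕ∞) φ)
    (hlift : ∀ θ, φ (θ + 2 * π) = φ θ + 2 * π) (n : ℤ) (hn : n ≠ 0) :
    fourierCoeffOn (by positivity : (0:ℝ) < 2 * π)
        (fun θ => Complex.I * m * (deriv φ θ) * efun φ m θ) n
      = Complex.I * n * fourierCoeffOn (by positivity : (0:ℝ) < 2 * π) (efun φ m) n := by
  have key := fourierCoeffOn_of_hasDerivAt (by positivity : (0:ℝ) < 2 * π) hn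
    (f := efun φ m) (f' := fun θ => Complex.I * m * (deriv φ θ) * efun φ m θ)
    (fun x _ => hasDerivAt_efun φ m hφ x)
    ((continuous_efun' φ m hφ).intervalIntegrable 0 (2 * π))
  have hper0 : efun φ m (2 * π) = efun φ m 0 := by
    simpa using (efun_periodic φ m hlift) 0
  rw [hper0, sub_self, mul_zero, zero_sub] at key
  rw [key]
  have hn' : (n : ℂ) ≠ 0 := Int.cast_ne_zero.mpr hn
  have hπ : (π : ℂ) ≠ 0 := Complex.ofReal_ne_zero.mpr Real.pi_ne_zero
  have hI := Complex.I_ne_zero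
  push_cast
  field_simp
  ring

lemma sum_sq_Icoef (φ : ℝ → ℝ) (m : ℤ) (hφ : ContDiff ℝ (⊤ : ℕ∞) φ)
    (hlift : ∀ θ, φ (θ + 2 * π) = φ θ + 2 * π) :
    Summable (fun n : ℤ => ‖Icoef φ n m‖ ^ 2) ∧ ∑' n : ℤ, ‖Icoef φ n m‖ ^ 2 = 1 := by
  have h := parseval_lift (efun φ m) (efun_periodic φ m hlift)
    (continuous_efun φ m hφ.continuous)
  have he : ∀ n : ℤ, fourierCoeff ((efun_periodic φ m hlift).lift : AddCircle (2 * π) → ℂ) n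
      = Icoef φ n m := fun n => (Icoef_eq φ m n hlift).symm
  simp_rw [he] at h
  have hint : (∫ θ in Ioc (0:ℝ) (2 * π), ‖efun φ m θ‖ ^ 2) = 2 * π := by
    simp_rw [norm_efun, one_pow]
    rw [setIntegral_const, Real.volume_real_Ioc_of_le (by positivity), smul_eq_mul, mul_one,
      sub_zero]
  rw [hint] at h
  refine ⟨h.1, ?_⟩
  rw [h.2]
  field_simp

lemma sum_sq_deriv (φ : ℝ → ℝ) (m : ℤ) (hφ : ContDiff ℝ (⊤ : ℕ∞) φ)
    (hφ' : ∀ θ, 0 < deriv φ θ)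
    (hlift : ∀ θ, φ (θ + 2 * π) = φ θ + 2 * π) :
    Summable (fun n : ℤ =>
      ‖fourierCoeff ((efun'_periodic φ m hlift).lift : AddCircle (2 * π) → ℂ) n‖ ^ 2) ∧
    ∑' n : ℤ, ‖fourierCoeff ((efun'_periodic φ m hlift).lift : AddCircle (2 * π) → ℂ) n‖ ^ 2
      = (m : ℝ) ^ 2 * ((1 / (2 * π)) * ∫ θ in Ioc (0:ℝ) (2 * π), (deriv φ θ) ^ 2) := by
  have h := parseval_lift _ (efun'_periodic φ m hlift) (continuous_efun' φ m hφ)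
  have hint : (∫ θ in Ioc (0:ℝ) (2 * π), ‖Complex.I * m * (deriv φ θ) * efun φ m θ‖ ^ 2)
      = (m : ℝ) ^ 2 * ∫ θ in Ioc (0:ℝ) (2 * π), (deriv φ θ) ^ 2 := by
    rw [← MeasureTheory.integral_const_mul]
    refine setIntegral_congr_fun measurableSet_Ioc fun θ _ => ?_
    rw [norm_efun' φ m hφ' θ, mul_pow, sq_abs]
  rw [hint] at h
  exact ⟨h.1, by rw [h.2]; ring⟩

lemma norm_coeff_rel (φ : ℝ → ℝ) (m : ℤ) (hφ : ContDiff ℝ (⊤ : ℕ∞) φ)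
    (hlift : ∀ θ, φ (θ + 2 * π) = φ θ + 2 * π) (n : ℤ) (hn : n ≠ 0) :
    ‖fourierCoeff ((efun'_periodic φ m hlift).lift : AddCircle (2 * π) → ℂ) n‖
      = |(n : ℝ)| * ‖Icoef φ n m‖ := by
  rw [fourierCoeff_periodic_lift, coeff_rel φ m hφ hlift n hn,
    Icoef_eq φ m n hlift, fourierCoeff_periodic_lift]
  rw [norm_mul, norm_mul, Complex.norm_I, one_mul, Complex.norm_intCast]

end RowsAux

open RowsAux

/-- For a lift `φ` of an orientation-preserving `C^∞` diffeomorphism of `S¹`, there are a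
constant `C > 0` and an integer `M₀` such that for all `m ≠ 0` with `|m| ≥ M₀` one has
`Σ_{n≠0} |n|·|I_{n,m}|² ≤ C·|m|` (the sum on the left being finite). -/
theorem rows_uniform_bound (φ : ℝ → ℝ) (hφ : ContDiff ℝ (⊤ : ℕ∞) φ)
    (hφ' : ∀ θ, 0 < deriv φ θ) (hlift : ∀ θ, φ (θ + 2 * Real.pi) = φ θ + 2 * Real.pi) :
    ∃ C : ℝ, 0 < C ∧ ∃ M₀ : ℤ, ∀ m : ℤ, m ≠ 0 → M₀ ≤ |m| →
      (∑' n : ℤ, if n = 0 then 0 else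
          ENNReal.ofReal ((|n| : ℝ) * ‖Icoef φ n m‖ ^ 2))
        ≤ ENNReal.ofReal (C * (|m| : ℝ)) := by
  classical
  have hT : Fact (0 < 2 * π) := ⟨by positivity⟩
  set A : ℝ := (1 / (2 * π)) * ∫ θ in Ioc (0:ℝ) (2 * π), (deriv φ θ) ^ 2 with hA
  have hA0 : 0 ≤ A := mul_nonneg (by positivity)
    (setIntegral_nonneg measurableSet_Ioc fun θ _ => sq_nonneg _)
  refine ⟨(A + 1) / 2, by linarith, 0, ?_⟩
  intro m hm _
  set M : ℝ := |(m : ℝ)| with hMdef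
  have hM : 0 < M := abs_pos.mpr (Int.cast_ne_zero.mpr hm)
  obtain ⟨hS1, hT1⟩ := sum_sq_Icoef φ m hφ hlift
  obtain ⟨hS2, hT2⟩ := sum_sq_deriv φ m hφ hφ' hlift
  set c' : ℤ → ℝ := fun n =>
    ‖fourierCoeff ((efun'_periodic φ m hlift).lift : AddCircle (2 * π) → ℂ) n‖ with hc'
  set g : ℤ → ℝ := fun n => (c' n) ^ 2 / (2 * M) + (M / 2) * ‖Icoef φ n m‖ ^ 2 with hg
  have hgsum : Summable g := (hS2.div_const _).add (hS1.mul_left _)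
  have hgnn : ∀ n, 0 ≤ g n := fun n =>
    add_nonneg (div_nonneg (sq_nonneg _) (by positivity))
      (mul_nonneg (by positivity) (sq_nonneg _))
  have htsum : ∑' n, g n = ((A + 1) / 2) * M := by
    rw [hg, Summable.tsum_add (hS2.div_const _) (hS1.mul_left _), tsum_div_const, tsum_mul_left,
      hT1, hT2, ← hA]
    have hmM : (m : ℝ) ^ 2 = M ^ 2 := by rw [hMdef, sq_abs]
    rw [hmM]
    field_simp
  have hpt : ∀ n : ℤ, (if n = 0 then 0 else
      ENNReal.ofReal ((|n| : ℝ) * ‖Icoef φ n m‖ ^ 2)) ≤ ENNReal.ofReal (g n) := by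
    intro n
    by_cases h0 : n = 0
    · simp [h0, hgnn n]
    · rw [if_neg h0]
      refine ENNReal.ofReal_le_ofReal ?_
      have hrel := norm_coeff_rel φ m hφ hlift n h0
      rw [hg]
      dsimp only
      rw [hc']
      dsimp only
      rw [hrel, mul_pow, sq_abs]
      set x : ℝ := ‖Icoef φ n m‖ ^ 2 with hx
      have hx0 : 0 ≤ x := by rw [hx]; positivity
      have key : |(n : ℝ)| * x * (2 * M) ≤ (n : ℝ) ^ 2 * x + M ^ 2 * x := by
        nlinarith [mul_nonneg hx0 (sq_nonneg (|(n : ℝ)| - M)), sq_abs (n : ℝ)]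
      have h2M : (0:ℝ) < 2 * M := by linarith
      calc |(n : ℝ)| * x ≤ ((n : ℝ) ^ 2 * x + M ^ 2 * x) / (2 * M) :=
            (le_div_iff₀ h2M).mpr key
        _ = (n : ℝ) ^ 2 * x / (2 * M) + M / 2 * x := by field_simp
  calc (∑' n : ℤ, if n = 0 then 0 else
          ENNReal.ofReal ((|n| : ℝ) * ‖Icoef φ n m‖ ^ 2))
      ≤ ∑' n : ℤ, ENNReal.ofReal (g n) := ENNReal.tsum_le_tsum hpt
    _ = ENNReal.ofReal (∑' n, g n) := (ENNReal.ofReal_tsum_of_nonneg hgnn hgsum).symm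
    _ = ENNReal.ofReal ((A + 1) / 2 * M) := by rw [htsum]
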